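/- Let G be a finite simple graph with no cycles of even length. Then all orientations of G have the same skew-characteristic polynomial: for any two orientations G₁, G₂ of G, the skew-adjacency matrices S(G₁) and S(G₂) have equal characteristic polynomials. -/

import Mathlib

open Matrix

/-- `S` is the skew-adjacency matrix of an orientation of the simple graph `G`. -/
def IsOrientationMatrix {n : ℕ} (G : SimpleGraph (Fin n)) (S : Matrix (Fin n) (Fin n) ℝ) :
    Prop :=
  (∀ i j, G.Adj i j → (S i j = 1 ∧ S j i = -1) ∨ (S i j = -1 ∧ S j i = 1)) ∧
  (∀ i j, ¬G.Adj i j → S i j = 0)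

namespace Stmt14Aux

open Finset Equiv Equiv.Perm Polynomial

section Walks

variable {V : Type*} {G : SimpleGraph V}

/-- Build a walk following `f` for `m` steps starting at index `a`. -/
def buildWalk (G : SimpleGraph V) (f : ℕ → V) :
    (m a : ℕ) → (∀ k, a ≤ k → k < a + m → G.Adj (f k) (f (k + 1))) → G.Walk (f a) (f (a + m))
  | 0, a, _ => SimpleGraph.Walk.nil.copy rfl (by rw [Nat.add_zero])
  | (m + 1), a, h =>
    (SimpleGraph.Walk.cons (h a le_rfl (by omega))
        (buildWalk G f m (a + 1) (fun k hk hk' => h k (by omega) (by omega)))).copy rfl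
      (congrArg f (by omega))

@[simp] lemma buildWalk_length (f : ℕ → V) (m a : ℕ) (h) :
    (buildWalk G f m a h).length = m := by
  induction m generalizing a with
  | zero => simp [buildWalk]
  | succ m ih => simp [buildWalk, ih]

lemma buildWalk_support (f : ℕ → V) (m a : ℕ) (h) :
    (buildWalk G f m a h).support = (List.range (m + 1)).map (fun k => f (a + k)) := by
  induction m generalizing a with
  | zero => simp [buildWalk, List.range_succ]
  | succ m ih =>
    rw [buildWalk]
    rw [SimpleGraph.Walk.support_copy, SimpleGraph.Walk.support_cons, ih]
    rw [List.range_succ_eq_map (n := m + 1), List.map_cons, List.map_map]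
    simp only [Nat.add_zero]
    congr 1
    apply List.map_congr_left
    intro x _
    simp only [Function.comp_apply]
    congr 1
    omega

lemma buildWalk_edges (f : ℕ → V) (m a : ℕ) (h) :
    (buildWalk G f m a h).edges = (List.range m).map (fun k => s(f (a + k), f (a + k + 1))) := by
  induction m generalizing a with
  | zero => simp [buildWalk]
  | succ m ih =>
    rw [buildWalk]
    rw [SimpleGraph.Walk.edges_copy, SimpleGraph.Walk.edges_cons, ih]
    rw [List.range_succ_eq_map (n := m), List.map_cons, List.map_map]
    simp only [Nat.add_zero]
    congr 1
    apply List.map_congr_left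
    intro x _
    simp only [Function.comp_apply]
    have e1 : a + 1 + x = a + (x + 1) := by omega
    rw [e1]

lemma exists_cycle_of (f : ℕ → V) (L : ℕ) (hL : 3 ≤ L)
    (hadj : ∀ k, k < L → G.Adj (f k) (f (k + 1)))
    (hcl : f L = f 0)
    (hinj : ∀ k, k < L → ∀ m, m < L → f k = f m → k = m) :
    ∃ w : G.Walk (f 0) (f 0), w.IsCycle ∧ w.length = L := by
  have h0 : (0 : ℕ) + L = L := by omega
  refine ⟨((buildWalk G f L 0 (fun k hk hk' => hadj k (by omega))).copy rfl
      (by rw [h0, hcl])), ?_, by simp⟩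
  rw [SimpleGraph.Walk.isCycle_def]
  refine ⟨?_, ?_, ?_⟩
  · -- IsTrail : edges nodup
    constructor
    rw [SimpleGraph.Walk.edges_copy, buildWalk_edges]
    simp only [Nat.zero_add]
    refine List.Nodup.map_on ?_ List.nodup_range
    intro k hk m hm he
    rw [List.mem_range] at hk hm
    rw [Sym2.eq_iff] at he
    rcases he with ⟨h1, h2⟩ | ⟨h1, h2⟩
    · exact hinj k hk m hm h1
    · -- f k = f (m+1), f (k+1) = f m
      rcases Nat.lt_or_ge (m + 1) L with hm1 | hm1
      · have hkm : k = m + 1 := hinj k hk (m + 1) hm1 h1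
        rcases Nat.lt_or_ge (k + 1) L with hk1 | hk1
        · have : k + 1 = m := hinj (k + 1) hk1 m hm h2
          omega
        · -- k + 1 = L, so f m = f 0
          have hkL : k + 1 = L := by omega
          have : f m = f 0 := by rw [← h2, hkL, hcl]
          have : m = 0 := hinj m hm 0 (by omega) this
          omega
      · -- m + 1 = L : f k = f 0
        have hmL : m + 1 = L := by omega
        have : f k = f 0 := by rw [h1, hmL, hcl]
        have hk0 : k = 0 := hinj k hk 0 (by omega) this
        rcases Nat.lt_or_ge (k + 1) L with hk1 | hk1
        · have : k + 1 = m := hinj (k + 1) hk1 m hm h2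
          omega
        · omega
  · -- not nil
    intro hnil
    have := congrArg SimpleGraph.Walk.length hnil
    simp at this
    omega
  · -- support tail nodup
    rw [SimpleGraph.Walk.support_copy, buildWalk_support]
    simp only [Nat.zero_add]
    rw [List.range_succ_eq_map, List.map_cons, List.tail_cons, List.map_map]
    refine List.Nodup.map_on ?_ List.nodup_range
    intro k hk m hm he
    rw [List.mem_range] at hk hm
    simp only [Function.comp_apply, Nat.succ_eq_add_one] at he
    rcases Nat.lt_or_ge (k + 1) L with hk1 | hk1
    · rcases Nat.lt_or_ge (m + 1) L with hm1 | hm1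
      · have := hinj (k + 1) hk1 (m + 1) hm1 he
        omega
      · have hmL : m + 1 = L := by omega
        have : f (k + 1) = f 0 := by rw [he, hmL, hcl]
        have := hinj (k + 1) hk1 0 (by omega) this
        omega
    · rcases Nat.lt_or_ge (m + 1) L with hm1 | hm1
      · have hkL : k + 1 = L := by omega
        have : f (m + 1) = f 0 := by rw [← he, hkL, hcl]
        have := hinj (m + 1) hm1 0 (by omega) this
        omega
      · omega

end Walks

variable {n : ℕ}

/-- The set of points not fixed by `σ ∘ σ`. -/
def movedTwo (σ : Perm (Fin n)) : Finset (Fin n) :=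
  Finset.univ.filter fun i => σ (σ i) ≠ i

lemma mem_movedTwo {σ : Perm (Fin n)} {i : Fin n} : i ∈ movedTwo σ ↔ σ (σ i) ≠ i := by
  simp [movedTwo]

/-- Reverse the cycle of `σ` containing the least point moved by `σ ∘ σ`. -/
def flip (σ : Perm (Fin n)) : Perm (Fin n) :=
  if h : (movedTwo σ).Nonempty then
    letI i₀ := (movedTwo σ).min' h
    (σ.cycleOf i₀)⁻¹ * ((σ.cycleOf i₀)⁻¹ * σ)
  else σ

section
variable {σ : Perm (Fin n)} (h : (movedTwo σ).Nonempty)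
include h

lemma min'_spec : σ (σ ((movedTwo σ).min' h)) ≠ (movedTwo σ).min' h :=
  mem_movedTwo.1 ((movedTwo σ).min'_mem h)

lemma min'_moved : σ ((movedTwo σ).min' h) ≠ (movedTwo σ).min' h := by
  intro he
  exact min'_spec h (by rw [he, he])

lemma flip_eq : flip σ =
    (σ.cycleOf ((movedTwo σ).min' h))⁻¹ * ((σ.cycleOf ((movedTwo σ).min' h))⁻¹ * σ) := by
  rw [flip, dif_pos h]

lemma flip_apply_of_sameCycle {j : Fin n}
    (hj : σ.SameCycle ((movedTwo σ).min' h) j) : flip σ j = σ⁻¹ j := by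
  set i₀ := (movedTwo σ).min' h with hi₀
  rw [flip_eq h]
  simp only [Perm.mul_apply]
  rw [cycleOf_inv]
  have e1 : (σ⁻¹.cycleOf i₀) (σ j) = j := by
    rw [cycleOf_apply, if_pos (by rwa [sameCycle_inv, sameCycle_apply_right]), coe_inv, symm_apply_apply]
  rw [e1, cycleOf_apply, if_pos (by rwa [sameCycle_inv])]

lemma flip_apply_of_not_sameCycle {j : Fin n}
    (hj : ¬ σ.SameCycle ((movedTwo σ).min' h) j) : flip σ j = σ j := by
  set i₀ := (movedTwo σ).min' h with hi₀
  rw [flip_eq h]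
  simp only [Perm.mul_apply]
  rw [cycleOf_inv]
  have e1 : (σ⁻¹.cycleOf i₀) (σ j) = σ j := by
    rw [cycleOf_apply, if_neg (by rwa [sameCycle_inv, sameCycle_apply_right])]
  rw [e1, e1]

lemma flip_inv_apply_of_sameCycle {j : Fin n}
    (hj : σ.SameCycle ((movedTwo σ).min' h) j) : (flip σ)⁻¹ j = σ j := by
  have h1 : flip σ (σ j) = j := by
    rw [flip_apply_of_sameCycle h (by rwa [sameCycle_apply_right]), coe_inv, symm_apply_apply]
  have h2 := congrArg (⇑(flip σ)⁻¹) h1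
  simpa using h2.symm

lemma flip_zpow_apply (k : ℤ) :
    ((flip σ) ^ k) ((movedTwo σ).min' h) = (σ ^ (-k)) ((movedTwo σ).min' h) := by
  set i₀ := (movedTwo σ).min' h with hi₀
  induction k using Int.induction_on with
  | zero => simp
  | succ k ih =>
    have e1 : (flip σ) ^ ((k : ℤ) + 1) = flip σ * (flip σ) ^ (k : ℤ) := by
      rw [add_comm, _root_.zpow_add, zpow_one]
    have e2 : σ ^ (-((k : ℤ) + 1)) = σ⁻¹ * σ ^ (-(k : ℤ)) := by
      rw [neg_add, add_comm, _root_.zpow_add, _root_.zpow_neg_one]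
    rw [e1, e2, Perm.mul_apply, Perm.mul_apply, ih]
    exact flip_apply_of_sameCycle h ⟨-k, rfl⟩
  | pred k ih =>
    have e1 : (flip σ) ^ (-(k : ℤ) - 1) = (flip σ)⁻¹ * (flip σ) ^ (-(k : ℤ)) := by
      rw [sub_eq_add_neg, add_comm, _root_.zpow_add, _root_.zpow_neg_one]
    have e2 : σ ^ (-(-(k : ℤ) - 1)) = σ * σ ^ (-(-(k : ℤ))) := by
      rw [neg_sub, sub_eq_add_neg, add_comm, _root_.zpow_add, zpow_one, neg_neg]
      group
    rw [e1, e2, Perm.mul_apply, Perm.mul_apply, ih]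
    exact flip_inv_apply_of_sameCycle h ⟨- -(k : ℤ), rfl⟩

lemma sameCycle_flip {j : Fin n} :
    (flip σ).SameCycle ((movedTwo σ).min' h) j ↔ σ.SameCycle ((movedTwo σ).min' h) j := by
  constructor
  · rintro ⟨k, rfl⟩
    exact ⟨-k, (flip_zpow_apply h k).symm⟩
  · rintro ⟨k, rfl⟩
    exact ⟨-k, by rw [flip_zpow_apply h (-k), neg_neg]⟩

lemma movedTwo_flip : movedTwo (flip σ) = movedTwo σ := by
  ext j
  simp only [mem_movedTwo]
  by_cases hj : σ.SameCycle ((movedTwo σ).min' h) j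
  · rw [flip_apply_of_sameCycle h hj,
      flip_apply_of_sameCycle h (by rwa [coe_inv, sameCycle_symm_apply_right])]
    constructor
    · intro h1 h2
      apply h1
      conv_lhs => rw [← h2]
      simp
    · intro h1 h2
      apply h1
      conv_lhs => rw [← h2]
      simp
  · rw [flip_apply_of_not_sameCycle h hj,
      flip_apply_of_not_sameCycle h (by rwa [sameCycle_apply_right])]

lemma cycleOf_flip :
    (flip σ).cycleOf ((movedTwo σ).min' h) = (σ.cycleOf ((movedTwo σ).min' h))⁻¹ := by
  set i₀ := (movedTwo σ).min' h
  apply Equiv.ext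
  intro x
  rw [cycleOf_inv, cycleOf_apply, cycleOf_apply]
  by_cases hx : σ.SameCycle i₀ x
  · rw [if_pos (by rwa [sameCycle_flip h]), if_pos (by rwa [sameCycle_inv]),
      flip_apply_of_sameCycle h hx]
  · rw [if_neg (by rwa [sameCycle_flip h]), if_neg (by rwa [sameCycle_inv])]

lemma flip_flip : flip (flip σ) = σ := by
  have h2 : (movedTwo (flip σ)).Nonempty := by rw [movedTwo_flip h]; exact h
  rw [flip_eq h2]
  simp only [movedTwo_flip h]
  rw [cycleOf_flip h, flip_eq h]
  group

lemma sign_flip : Perm.sign (flip σ) = Perm.sign σ := by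
  rw [flip_eq h]
  simp only [_root_.map_mul, _root_.map_inv]
  rcases Int.units_eq_one_or (Perm.sign (σ.cycleOf ((movedTwo σ).min' h))) with h1 | h1 <;>
    rw [h1] <;> simp

lemma flip_ne : flip σ ≠ σ := by
  intro he
  have h1 : flip σ ((movedTwo σ).min' h) = σ⁻¹ ((movedTwo σ).min' h) :=
    flip_apply_of_sameCycle h (SameCycle.refl _ _)
  rw [he] at h1
  apply min'_spec h
  rw [h1]
  simp

lemma mem_cycleSupport {j : Fin n} :
    j ∈ (σ.cycleOf ((movedTwo σ).min' h)).support ↔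
      σ.SameCycle ((movedTwo σ).min' h) j := by
  rw [Equiv.Perm.mem_support_cycleOf_iff]
  simp [Equiv.Perm.mem_support, min'_moved h]

lemma moved_of_sameCycle {j : Fin n}
    (hj : σ.SameCycle ((movedTwo σ).min' h) j) : σ j ≠ j := by
  intro he
  exact min'_moved h (hj.apply_eq_self_iff.2 he)

lemma three_le_card :
    3 ≤ (σ.cycleOf ((movedTwo σ).min' h)).support.card := by
  set i₀ := (movedTwo σ).min' h with hi₀
  have h1 : σ i₀ ≠ i₀ := min'_moved h
  have h2 : σ (σ i₀) ≠ i₀ := min'_spec h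
  have hsub : ({i₀, σ i₀, σ (σ i₀)} : Finset (Fin n)) ⊆ (σ.cycleOf i₀).support := by
    intro x hx
    simp only [Finset.mem_insert, Finset.mem_singleton] at hx
    rw [mem_cycleSupport h]
    rcases hx with rfl | rfl | rfl
    · exact Equiv.Perm.SameCycle.refl _ _
    · exact ⟨1, by rw [zpow_one]⟩
    · exact ⟨2, by rw [show (2 : ℤ) = 1 + 1 by norm_num, _root_.zpow_add, zpow_one]; rfl⟩
  have hcard : ({i₀, σ i₀, σ (σ i₀)} : Finset (Fin n)).card = 3 := by
    rw [Finset.card_insert_of_notMem, Finset.card_insert_of_notMem, Finset.card_singleton]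
    · simp only [Finset.mem_singleton]
      intro he
      exact h1 (σ.injective he.symm)
    · simp only [Finset.mem_insert, Finset.mem_singleton]
      push_neg
      exact ⟨fun he => h1 he.symm, fun he => h2 he.symm⟩
  calc 3 = ({i₀, σ i₀, σ (σ i₀)} : Finset (Fin n)).card := hcard.symm
    _ ≤ _ := Finset.card_le_card hsub

lemma pow_card_apply :
    (σ ^ (σ.cycleOf ((movedTwo σ).min' h)).support.card) ((movedTwo σ).min' h) =
      (movedTwo σ).min' h := by
  set i₀ := (movedTwo σ).min' h with hi₀
  set L := (σ.cycleOf i₀).support.card with hL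
  have hc : (σ.cycleOf i₀).IsCycle := Equiv.Perm.isCycle_cycleOf σ (min'_moved h)
  have horder : orderOf (σ.cycleOf i₀) = L := hc.orderOf
  rw [← Equiv.Perm.cycleOf_pow_apply_self, ← horder, pow_orderOf_eq_one]
  rfl

lemma pow_apply_injOn {k m : ℕ}
    (hk : k < (σ.cycleOf ((movedTwo σ).min' h)).support.card)
    (hm : m < (σ.cycleOf ((movedTwo σ).min' h)).support.card)
    (he : (σ ^ k) ((movedTwo σ).min' h) = (σ ^ m) ((movedTwo σ).min' h)) : k = m := by
  set i₀ := (movedTwo σ).min' h with hi₀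
  set L := (σ.cycleOf i₀).support.card with hL
  have hc : (σ.cycleOf i₀).IsCycle := Equiv.Perm.isCycle_cycleOf σ (min'_moved h)
  have horder : orderOf (σ.cycleOf i₀) = L := hc.orderOf
  have hcm : (σ.cycleOf i₀) i₀ ≠ i₀ := by
    rw [Equiv.Perm.cycleOf_apply_self]; exact min'_moved h
  have key : ∀ a b : ℕ, b < L → a ≤ b → (σ ^ a) i₀ = (σ ^ b) i₀ → a = b := by
    intro a b hb hab heq
    by_contra hne
    have hd : 0 < b - a := by omega
    have hfix : (σ ^ (b - a)) i₀ = i₀ := by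
      have h1 : (σ ^ b) i₀ = (σ ^ a) ((σ ^ (b - a)) i₀) := by
        rw [← Equiv.Perm.mul_apply, ← pow_add, Nat.add_sub_cancel' hab]
      rw [h1] at heq
      exact ((σ ^ a).injective heq).symm
    have hfix' : ((σ.cycleOf i₀) ^ (b - a)) i₀ = i₀ := by
      rw [Equiv.Perm.cycleOf_pow_apply_self]; exact hfix
    have hone : (σ.cycleOf i₀) ^ (b - a) = 1 := (hc.pow_eq_one_iff' hcm).2 hfix'
    have := orderOf_le_of_pow_eq_one hd hone
    rw [horder] at this
    omega
  rcases le_total k m with hkm | hkm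
  · exact key k m hm hkm he
  · exact (key m k hk hkm he.symm).symm

end

section MatrixFacts

variable {G : SimpleGraph (Fin n)} {S S₁ S₂ : Matrix (Fin n) (Fin n) ℝ}

lemma skew (hS : IsOrientationMatrix G S) (i j : Fin n) : S j i = -S i j := by
  by_cases hadj : G.Adj i j
  · rcases hS.1 i j hadj with ⟨e1, e2⟩ | ⟨e1, e2⟩ <;> rw [e1, e2] <;> norm_num
  · rw [hS.2 i j hadj, hS.2 j i fun hadj' => hadj hadj'.symm, neg_zero]

lemma prod_flip (hskew : ∀ i j, S j i = -S i j) (σ : Perm (Fin n))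
    (h : (movedTwo σ).Nonempty) :
    ∏ i, (charmatrix S) (flip σ i) i =
      (-1 : ℝ[X]) ^ (σ.cycleOf ((movedTwo σ).min' h)).support.card *
        ∏ i, (charmatrix S) (σ i) i := by
  set i₀ := (movedTwo σ).min' h with hi₀
  set T := (σ.cycleOf i₀).support with hT
  rw [← Finset.prod_mul_prod_compl T (fun i => (charmatrix S) (flip σ i) i),
      ← Finset.prod_mul_prod_compl T (fun i => (charmatrix S) (σ i) i)]
  have hcompl : ∀ i ∈ Tᶜ, (charmatrix S) (flip σ i) i = (charmatrix S) (σ i) i := by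
    intro i hi
    rw [Finset.mem_compl, hT, mem_cycleSupport h] at hi
    rw [flip_apply_of_not_sameCycle h hi]
  rw [Finset.prod_congr rfl hcompl]
  have hT1 : ∀ i ∈ T, (charmatrix S) (flip σ i) i = (charmatrix S) (σ⁻¹ i) i := by
    intro i hi
    rw [hT, mem_cycleSupport h] at hi
    rw [flip_apply_of_sameCycle h hi]
  rw [Finset.prod_congr rfl hT1]
  have hT2 : ∏ i ∈ T, (charmatrix S) (σ⁻¹ i) i = ∏ j ∈ T, (charmatrix S) j (σ j) := by
    refine Finset.prod_bij' (fun j _ => σ⁻¹ j) (fun j _ => σ j) ?_ ?_ ?_ ?_ ?_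
    · intro a ha
      show σ⁻¹ a ∈ T
      rw [hT, mem_cycleSupport h] at ha ⊢
      rwa [coe_inv, sameCycle_symm_apply_right]
    · intro a ha
      show σ a ∈ T
      rw [hT, mem_cycleSupport h] at ha ⊢
      rwa [sameCycle_apply_right]
    · intro a ha; simp
    · intro a ha; simp
    · intro a ha
      show (charmatrix S) (σ⁻¹ a) a = (charmatrix S) (σ⁻¹ a) (σ (σ⁻¹ a))
      rw [Equiv.Perm.coe_inv, Equiv.apply_symm_apply]
  rw [hT2]
  have hT3 : ∀ j ∈ T, (charmatrix S) j (σ j) = -((charmatrix S) (σ j) j) := by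
    intro j hj
    rw [hT, mem_cycleSupport h] at hj
    have hmv : σ j ≠ j := moved_of_sameCycle h hj
    rw [charmatrix_apply_ne _ _ _ (Ne.symm hmv), charmatrix_apply_ne _ _ _ hmv,
      hskew (σ j) j, map_neg, neg_neg]
  rw [Finset.prod_congr rfl hT3]
  have hneg : (∏ j ∈ T, -((charmatrix S) (σ j) j)) =
      ∏ j ∈ T, ((-1 : ℝ[X]) * (charmatrix S) (σ j) j) := by
    apply Finset.prod_congr rfl
    intro j _
    rw [neg_one_mul]
  rw [hneg, Finset.prod_mul_distrib, Finset.prod_const]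
  ring

lemma odd_card (hS : IsOrientationMatrix G S)
    (hodd : ∀ (u : Fin n) (w : G.Walk u u), w.IsCycle → Odd w.length)
    (σ : Perm (Fin n)) (h : (movedTwo σ).Nonempty)
    (hnz : ∏ i, (charmatrix S) (σ i) i ≠ 0) :
    Odd (σ.cycleOf ((movedTwo σ).min' h)).support.card := by
  set i₀ := (movedTwo σ).min' h with hi₀
  set L := (σ.cycleOf i₀).support.card with hL
  have hadjfac : ∀ j, σ.SameCycle i₀ j → G.Adj j (σ j) := by
    intro j hj
    have hfac : (charmatrix S) (σ j) j ≠ 0 := by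
      rw [Finset.prod_ne_zero_iff] at hnz
      exact hnz j (Finset.mem_univ j)
    have hmv : σ j ≠ j := moved_of_sameCycle h hj
    rw [charmatrix_apply_ne _ _ _ hmv] at hfac
    have hSne : S (σ j) j ≠ 0 := by
      intro e
      rw [e] at hfac
      simp at hfac
    by_contra hna
    exact hSne (hS.2 _ _ fun ha => hna ha.symm)
  set f : ℕ → Fin n := fun k => (σ ^ k) i₀ with hf
  have hadj : ∀ k, k < L → G.Adj (f k) (f (k + 1)) := by
    intro k hk
    have hstep : f (k + 1) = σ (f k) := by
      simp only [hf]
      rw [pow_succ']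
      rfl
    rw [hstep]
    exact hadjfac (f k) ⟨(k : ℤ), by simp [hf]⟩
  have hcl : f L = f 0 := by
    simp only [hf, pow_zero]
    rw [hL, hi₀]
    exact pow_card_apply h
  have hinj : ∀ k, k < L → ∀ m, m < L → f k = f m → k = m := fun k hk m hm he =>
    pow_apply_injOn h hk hm he
  obtain ⟨w, hw, hlen⟩ := exists_cycle_of f L (three_le_card h) hadj hcl hinj
  have := hodd _ w hw
  rwa [hlen] at this

lemma pair_prod (hS₁ : IsOrientationMatrix G S₁) (hS₂ : IsOrientationMatrix G S₂)
    (σ : Perm (Fin n)) (hinv : ∀ i, σ (σ i) = i) :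
    ∀ s : Finset (Fin n), (∀ i ∈ s, σ i ∈ s) → (∀ i ∈ s, σ i ≠ i) →
      ∏ i ∈ s, (charmatrix S₁) (σ i) i = ∏ i ∈ s, (charmatrix S₂) (σ i) i := by
  intro s
  induction s using Finset.strongInduction with
  | _ s ih =>
    intro hcl hmv
    rcases s.eq_empty_or_nonempty with rfl | ⟨a, ha⟩
    · simp
    · have haσ : σ a ∈ s := hcl a ha
      have hane : a ≠ σ a := fun e => hmv a ha e.symm
      have hpairsub : ({a, σ a} : Finset (Fin n)) ⊆ s := by
        intro x hx
        simp only [Finset.mem_insert, Finset.mem_singleton] at hx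
        rcases hx with rfl | rfl
        · exact ha
        · exact haσ
      have hssub : s \ {a, σ a} ⊂ s :=
        Finset.sdiff_ssubset hpairsub ⟨a, by simp⟩
      have hcl' : ∀ i ∈ s \ {a, σ a}, σ i ∈ s \ {a, σ a} := by
        intro i hi
        rw [Finset.mem_sdiff] at hi ⊢
        obtain ⟨his, hine⟩ := hi
        simp only [Finset.mem_insert, Finset.mem_singleton] at hine ⊢
        push_neg at hine ⊢
        refine ⟨hcl i his, ?_, ?_⟩
        · intro e
          apply hine.2
          rw [← hinv i, e]
        · intro e
          apply hine.1
          have := congrArg σ e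
          rwa [hinv i, hinv a] at this
      have hmv' : ∀ i ∈ s \ {a, σ a}, σ i ≠ i := fun i hi =>
        hmv i (Finset.mem_sdiff.1 hi).1
      have hrec := ih _ hssub hcl' hmv'
      have hsplit : ∀ S : Matrix (Fin n) (Fin n) ℝ,
          ∏ i ∈ s, (charmatrix S) (σ i) i =
            ((charmatrix S) (σ a) a * (charmatrix S) (σ (σ a)) (σ a)) *
              ∏ i ∈ s \ {a, σ a}, (charmatrix S) (σ i) i := by
        intro S
        rw [← Finset.prod_sdiff hpairsub, Finset.prod_pair hane]
        ring
      rw [hsplit S₁, hsplit S₂, hrec]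
      congr 1
      have h1 : σ a ≠ a := hmv a ha
      have hred : ∀ S : Matrix (Fin n) (Fin n) ℝ,
          (charmatrix S) (σ a) a * (charmatrix S) (σ (σ a)) (σ a) =
            Polynomial.C (S (σ a) a * S a (σ a)) := by
        intro S
        rw [hinv a]
        rw [charmatrix_apply_ne _ _ _ h1, charmatrix_apply_ne _ _ _ (Ne.symm h1),
          neg_mul_neg, ← _root_.map_mul]
      rw [hred S₁, hred S₂]
      congr 1
      by_cases hadj : G.Adj a (σ a)
      · rcases hS₁.1 a (σ a) hadj with ⟨e1, e2⟩ | ⟨e1, e2⟩ <;>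
          rcases hS₂.1 a (σ a) hadj with ⟨f1, f2⟩ | ⟨f1, f2⟩ <;>
          rw [e1, e2, f1, f2] <;> ring
      · rw [hS₁.2 a (σ a) hadj, hS₂.2 a (σ a) hadj, mul_zero, mul_zero]

end MatrixFacts

end Stmt14Aux

open Stmt14Aux Polynomial Equiv Equiv.Perm in
/- Statement 14: if a finite simple graph G has no cycles of even length, then the
skew-adjacency matrices of any two orientations of G have the same characteristic
polynomial. -/
theorem stmt_14 (n : ℕ) (G : SimpleGraph (Fin n))
    (hodd : ∀ (u : Fin n) (w : G.Walk u u), w.IsCycle → Odd w.length)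
    (S₁ S₂ : Matrix (Fin n) (Fin n) ℝ)
    (h₁ : IsOrientationMatrix G S₁) (h₂ : IsOrientationMatrix G S₂) :
    S₁.charpoly = S₂.charpoly := by
  classical
  unfold Matrix.charpoly
  rw [Matrix.det_apply', Matrix.det_apply']
  have hsplit : ∀ S : Matrix (Fin n) (Fin n) ℝ,
      (∑ σ : Perm (Fin n), ((Perm.sign σ : ℤ) : ℝ[X]) * ∏ i, (charmatrix S) (σ i) i) =
        (∑ σ ∈ Finset.univ.filter (fun σ : Perm (Fin n) => ∀ i, σ (σ i) = i),
          ((Perm.sign σ : ℤ) : ℝ[X]) * ∏ i, (charmatrix S) (σ i) i) +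
        ∑ σ ∈ Finset.univ.filter (fun σ : Perm (Fin n) => ¬ ∀ i, σ (σ i) = i),
          ((Perm.sign σ : ℤ) : ℝ[X]) * ∏ i, (charmatrix S) (σ i) i := by
    intro S
    rw [Finset.sum_filter_add_sum_filter_not]
  rw [hsplit S₁, hsplit S₂]
  have hzero : ∀ S : Matrix (Fin n) (Fin n) ℝ, IsOrientationMatrix G S →
      (∑ σ ∈ Finset.univ.filter (fun σ : Perm (Fin n) => ¬ ∀ i, σ (σ i) = i),
        ((Perm.sign σ : ℤ) : ℝ[X]) * ∏ i, (charmatrix S) (σ i) i) = 0 := by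
    intro S hS
    refine Finset.sum_involution (fun σ _ => flip σ) ?_ ?_ ?_ ?_
    · intro σ hσ
      rw [Finset.mem_filter] at hσ
      have hne : (movedTwo σ).Nonempty := by
        obtain ⟨i, hi⟩ := not_forall.1 hσ.2
        exact ⟨i, mem_movedTwo.2 hi⟩
      have hsgn : ((Perm.sign (flip σ) : ℤ) : ℝ[X]) = ((Perm.sign σ : ℤ) : ℝ[X]) := by
        rw [sign_flip hne]
      rw [hsgn, prod_flip (skew hS) σ hne]
      by_cases hP : ∏ i, (charmatrix S) (σ i) i = 0
      · rw [hP]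
        ring
      · have hoddL := odd_card hS hodd σ hne hP
        rw [hoddL.neg_one_pow]
        ring
    · intro σ hσ _
      have hne : (movedTwo σ).Nonempty := by
        rw [Finset.mem_filter] at hσ
        obtain ⟨i, hi⟩ := not_forall.1 hσ.2
        exact ⟨i, mem_movedTwo.2 hi⟩
      exact flip_ne hne
    · intro σ hσ
      rw [Finset.mem_filter] at hσ ⊢
      have hne : (movedTwo σ).Nonempty := by
        obtain ⟨i, hi⟩ := not_forall.1 hσ.2
        exact ⟨i, mem_movedTwo.2 hi⟩
      refine ⟨Finset.mem_univ _, ?_⟩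
      intro hall
      obtain ⟨j, hj⟩ := id hne
      rw [mem_movedTwo] at hj
      have : j ∈ movedTwo (flip σ) := by
        rw [movedTwo_flip hne, mem_movedTwo]
        exact hj
      rw [mem_movedTwo] at this
      exact this (hall j)
    · intro σ hσ
      have hne : (movedTwo σ).Nonempty := by
        rw [Finset.mem_filter] at hσ
        obtain ⟨i, hi⟩ := not_forall.1 hσ.2
        exact ⟨i, mem_movedTwo.2 hi⟩
      exact flip_flip hne
  rw [hzero S₁ h₁, hzero S₂ h₂]
  congr 1
  apply Finset.sum_congr rfl
  intro σ hσ
  rw [Finset.mem_filter] at hσ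
  have hinv := hσ.2
  congr 1
  have hfull : ∀ S : Matrix (Fin n) (Fin n) ℝ,
      (∏ i, (charmatrix S) (σ i) i) =
        (∏ i ∈ Finset.univ.filter (fun i => σ i = i), (charmatrix S) (σ i) i) *
          ∏ i ∈ Finset.univ.filter (fun i => ¬ σ i = i), (charmatrix S) (σ i) i := by
    intro S
    rw [Finset.prod_filter_mul_prod_filter_not]
  rw [hfull S₁, hfull S₂]
  have hfix : ∀ S : Matrix (Fin n) (Fin n) ℝ, IsOrientationMatrix G S →
      (∏ i ∈ Finset.univ.filter (fun i => σ i = i), (charmatrix S) (σ i) i) =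
        ∏ _i ∈ Finset.univ.filter (fun i => σ i = i), (Polynomial.X : ℝ[X]) := by
    intro S hS
    apply Finset.prod_congr rfl
    intro i hi
    rw [Finset.mem_filter] at hi
    rw [hi.2, Matrix.charmatrix_apply_eq, hS.2 i i (G.irrefl), map_zero, sub_zero]
  rw [hfix S₁ h₁, hfix S₂ h₂]
  congr 1
  apply Stmt14Aux.pair_prod h₁ h₂ σ hinv
  · intro i hi
    rw [Finset.mem_filter] at hi ⊢
    refine ⟨Finset.mem_univ _, ?_⟩
    intro he
    apply hi.2
    rw [hinv i] at he
    exact he.symm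
  · intro i hi
    rw [Finset.mem_filter] at hi
    exact hi.2
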